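/- Let 0 < α < π/2 and let a ≤ b be reals. Let γ : ℝ → ℂ be continuously differentiable on [a,b] and suppose that for every t ∈ [a,b] we have γ(t) ≠ 0 and the equality ⟪deriv γ t, −γ(t)⟫ = cos(α)·‖deriv γ t‖·‖γ(t)‖ (the tangent makes angle exactly α with the direction toward the origin). Then ∫_{a}^{b} ‖deriv γ t‖ dt = (1/cos α)·(‖γ(a)‖ − ‖γ(b)‖). -/

import Mathlib

lemma norm_hasDerivAt {γ : ℝ → ℂ} {g : ℂ} {t : ℝ} (h : HasDerivAt γ g t)
    (hz : γ t ≠ 0) :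
    HasDerivAt (fun s => ‖γ s‖) ((((starRingEnd ℂ) g) * γ t).re / ‖γ t‖) t := by
  have hre : HasDerivAt (fun s => (γ s).re) g.re t :=
    (Complex.reCLM.hasFDerivAt.comp_hasDerivAt t h)
  have him : HasDerivAt (fun s => (γ s).im) g.im t :=
    (Complex.imCLM.hasFDerivAt.comp_hasDerivAt t h)
  have hsq : HasDerivAt (fun s => (γ s).re * (γ s).re + (γ s).im * (γ s).im)
      (g.re * (γ t).re + (γ t).re * g.re + (g.im * (γ t).im + (γ t).im * g.im)) t :=
    (hre.mul hre).add (him.mul him)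
  have hsqne : (γ t).re * (γ t).re + (γ t).im * (γ t).im ≠ 0 := by
    have := Complex.normSq_pos.2 hz
    simpa [Complex.normSq_apply] using this.ne'
  have hsqrt := (Real.hasDerivAt_sqrt hsqne).comp t hsq
  have hval : ∀ s, Real.sqrt ((γ s).re * (γ s).re + (γ s).im * (γ s).im) = ‖γ s‖ := by
    intro s
    rw [Complex.norm_def, Complex.normSq_apply]
  have h2 : HasDerivAt (fun s => ‖γ s‖)
      (1 / (2 * Real.sqrt ((γ t).re * (γ t).re + (γ t).im * (γ t).im)) *
        (g.re * (γ t).re + (γ t).re * g.re + (g.im * (γ t).im + (γ t).im * g.im))) t := by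
    refine HasDerivAt.congr_of_eventuallyEq hsqrt (Filter.Eventually.of_forall fun s => (hval s).symm)
  convert h2 using 1
  rw [hval t]
  have hn : ‖γ t‖ ≠ 0 := norm_ne_zero_iff.2 hz
  field_simp [Complex.mul_re]
  rw [Complex.mul_re, Complex.conj_re, Complex.conj_im]
  ring

/-- if a continuously differentiable curve on `[a,b]` makes angle exactly
`α` with the direction toward the origin at every time (i.e., it is a spiral path),
then its length equals `sec(α)·(‖γ(a)‖ − ‖γ(b)‖)`. -/
theorem spiral_path_length (α : ℝ) (hα0 : 0 < α) (hα : α < Real.pi / 2)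
    (a b : ℝ) (hab : a ≤ b) (γ : ℝ → ℂ)
    (hγ : ContDiffOn ℝ 1 γ (Set.Icc a b))
    (hne : ∀ t ∈ Set.Icc a b, γ t ≠ 0)
    (hangle : ∀ t ∈ Set.Icc a b,
      ((starRingEnd ℂ) (deriv γ t) * (-(γ t))).re =
        Real.cos α * ‖deriv γ t‖ * ‖γ t‖) :
    (∫ t in a..b, ‖deriv γ t‖) = (1 / Real.cos α) * (‖γ a‖ - ‖γ b‖) := by
  have hcos : 0 < Real.cos α := Real.cos_pos_of_mem_Ioo ⟨by linarith [Real.pi_pos], hα⟩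
  rcases eq_or_lt_of_le hab with rfl | hab'
  · simp
  -- interior differentiability
  have hdiff : ∀ t ∈ Set.Ioo a b, HasDerivAt γ (deriv γ t) t := by
    intro t ht
    have h1 : ContDiffAt ℝ 1 γ t :=
      hγ.contDiffAt (Icc_mem_nhds ht.1 ht.2)
    exact (h1.differentiableAt one_ne_zero).hasDerivAt
  -- F has derivative -cos α * ‖deriv γ t‖ on Ioo
  have hF : ∀ t ∈ Set.Ioo a b,
      HasDerivAt (fun s => ‖γ s‖) (-(Real.cos α * ‖deriv γ t‖)) t := by
    intro t ht
    have ht' : t ∈ Set.Icc a b := Set.Ioo_subset_Icc_self ht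
    have h := norm_hasDerivAt (hdiff t ht) (hne t ht')
    have he : (((starRingEnd ℂ) (deriv γ t)) * γ t).re / ‖γ t‖
        = -(Real.cos α * ‖deriv γ t‖) := by
      have ha := hangle t ht'
      have hn : ‖γ t‖ ≠ 0 := norm_ne_zero_iff.2 (hne t ht')
      have : (((starRingEnd ℂ) (deriv γ t)) * γ t).re
          = -(Real.cos α * ‖deriv γ t‖ * ‖γ t‖) := by
        have : (((starRingEnd ℂ) (deriv γ t)) * (-(γ t))).re
            = -(((starRingEnd ℂ) (deriv γ t)) * γ t).re := by
          simp [Complex.neg_re]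
        linarith [ha, this.symm.trans ha]
      rw [this, neg_div, mul_div_assoc, div_self hn, mul_one]
    rwa [he] at h
  have hcont : ContinuousOn (fun s => ‖γ s‖) (Set.Icc a b) := (hγ.continuousOn).norm
  -- integrability of ‖deriv γ‖ : equal a.e. to continuous extension
  have hderivWithin : ContinuousOn (derivWithin γ (Set.Icc a b)) (Set.Icc a b) := by
    have := hγ.continuousOn_derivWithin (uniqueDiffOn_Icc hab') le_rfl
    exact this
  have heq : ∀ t ∈ Set.Ioo a b, deriv γ t = derivWithin γ (Set.Icc a b) t := by
    intro t ht
    rw [(hdiff t ht).deriv.symm] at *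
    exact ((hdiff t ht).hasDerivWithinAt.derivWithin
      ((uniqueDiffOn_Icc hab') t (Set.Ioo_subset_Icc_self ht))).symm ▸
      (hdiff t ht).deriv ▸ rfl
  set h : ℝ → ℝ := fun t => ‖derivWithin γ (Set.Icc a b) t‖ with hh
  have hcontH : ContinuousOn h (Set.Icc a b) := hderivWithin.norm
  have huIcc : Set.uIcc a b = Set.Icc a b := Set.uIcc_of_le hab
  have hIntH : IntervalIntegrable h MeasureTheory.volume a b :=
    (huIcc ▸ hcontH).intervalIntegrable
  have hIntH' : IntervalIntegrable (fun t => Real.cos α * h t) MeasureTheory.volume a b :=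
    hIntH.const_mul _
  have hF' : ∀ t ∈ Set.Ioo a b,
      HasDerivWithinAt (fun s => ‖γ s‖) (-(Real.cos α * h t)) (Set.Ioi t) t := by
    intro t ht
    have := hF t ht
    rw [hh]
    simp only [← heq t ht]
    exact this.hasDerivWithinAt
  have hftc := intervalIntegral.integral_eq_sub_of_hasDeriv_right_of_le hab hcont hF'
    (hIntH'.neg)
  have hkey : (∫ t in a..b, -(Real.cos α * h t)) = ‖γ b‖ - ‖γ a‖ := hftc
  have hcong : (∫ t in a..b, ‖deriv γ t‖) = ∫ t in a..b, h t := by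
    apply intervalIntegral.integral_congr_ae
    have hnull : (MeasureTheory.volume : MeasureTheory.Measure ℝ) {b} = 0 :=
      MeasureTheory.measure_singleton b
    filter_upwards [MeasureTheory.measure_eq_zero_iff_ae_notMem.1 hnull] with t htb htmem
    have : t ∈ Set.Ioo a b := by
      rcases Set.mem_uIoc.1 htmem with h1 | h1
      · exact ⟨h1.1, lt_of_le_of_ne h1.2 (by simpa using htb)⟩
      · exact absurd (h1.1.trans_le h1.2) (lt_irrefl _ ∘ fun h => h.trans hab')
        
    rw [hh]; simp [heq t this]
  rw [hcong]
  have : (∫ t in a..b, -(Real.cos α * h t)) = -(Real.cos α * ∫ t in a..b, h t) := by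
    rw [intervalIntegral.integral_neg, intervalIntegral.integral_const_mul]
  rw [this] at hkey
  have hcne : Real.cos α ≠ 0 := hcos.ne'
  rw [eq_comm, one_div, inv_mul_eq_iff_eq_mul₀ hcne]
  linarith
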